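/- Let X ∈ ℝ^{n×k} be a matrix each of whose columns has unit ℓ₂ norm and is orthogonal to the all-ones vector (1ᵀ·X_{:,i} = 0 for all i). Let v ∈ ℝⁿ be a unit vector and set c := vᵀ·1/√n. Then μ_v(X) ≥ k·c². -/
import Mathlib


open Matrix

/-- `μ_v(X) = ‖X − v·vᵀ·X‖_F²`. -/
noncomputable def muV {n k : ℕ} (v : Fin n → ℝ) (X : Matrix (Fin n) (Fin k) ℝ) : ℝ :=
  ∑ r, ∑ j, ((X - (Matrix.of fun a b => v a * v b) * X) r j) ^ 2

/-- If every column of `X ∈ ℝ^{n×k}` has unit ℓ₂-norm and is orthogonal to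
the all-ones vector, then for any unit vector `v`, with `c := vᵀ·1/√n`, `μ_v(X) ≥ k·c²`. -/
theorem stmt_18 {n k : ℕ}
    (X : Matrix (Fin n) (Fin k) ℝ)
    (hXunit : ∀ j, Real.sqrt (∑ r, (X r j) ^ 2) = 1)
    (hXorth : ∀ j, ∑ r, X r j = 0)
    (v : Fin n → ℝ) (hv : Real.sqrt (∑ r, v r ^ 2) = 1)
    (c : ℝ) (hc : c = (∑ r, v r) / Real.sqrt n) :
    k * c ^ 2 ≤ muV v X := by
  rcases Nat.eq_zero_or_pos k with hk | hk
  · subst hk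
    have : muV v X = 0 := by simp [muV]
    simp [this]
  rcases Nat.eq_zero_or_pos n with hn | hn
  · exfalso
    have h := hXunit ⟨0, hk⟩
    subst hn
    simp at h
  have hsq : (Real.sqrt n : ℝ) ≠ 0 := by
    have : (0:ℝ) < n := by exact_mod_cast hn
    positivity
  have hv2 : ∑ r, v r ^ 2 = 1 := by
    have h0 : (0:ℝ) ≤ ∑ r, v r ^ 2 := by positivity
    nlinarith [Real.sq_sqrt h0, hv]
  have hvs : ∑ r, v r = c * Real.sqrt n := by
    rw [hc]; field_simp
  have hn1 : (Real.sqrt n) ^ 2 = n := Real.sq_sqrt (by positivity)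
  -- key per-column bound
  have hcol : ∀ j, c ^ 2 ≤ ∑ r, ((X r j) - v r * (∑ a, v a * X a j)) ^ 2 := by
    intro j
    have hX2 : ∑ r, (X r j) ^ 2 = 1 := by
      have h0 : (0:ℝ) ≤ ∑ r, (X r j) ^ 2 := by positivity
      nlinarith [Real.sq_sqrt h0, hXunit j]
    set s : ℝ := ∑ a, v a * X a j with hs
    -- column sum equals 1 - s^2
    have hexp : ∑ r, ((X r j) - v r * s) ^ 2 = 1 - s ^ 2 := by
      have : ∑ r, ((X r j) - v r * s) ^ 2
          = ∑ r, ((X r j)^2 - 2 * s * (v r * X r j) + s^2 * (v r)^2) := by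
        apply Finset.sum_congr rfl; intro r _; ring
      rw [this, Finset.sum_add_distrib, Finset.sum_sub_distrib, ← Finset.mul_sum,
        ← Finset.mul_sum, hX2, hv2, ← hs]
      ring
    rw [hexp]
    -- Cauchy-Schwarz: s = ⟨v - (c/√n)·1, x⟩ and ‖v - (c/√n)·1‖² = 1 - c²
    have hw : ∑ r, (v r - c / Real.sqrt n) * X r j = s := by
      have : ∑ r, (v r - c / Real.sqrt n) * X r j
          = ∑ r, v r * X r j - (c / Real.sqrt n) * ∑ r, X r j := by
        rw [Finset.mul_sum, ← Finset.sum_sub_distrib]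
        apply Finset.sum_congr rfl; intro r _; ring
      rw [this, hXorth j]; simp [hs]
    have hwn : ∑ r, (v r - c / Real.sqrt n) ^ 2 = 1 - c ^ 2 := by
      have : ∑ r, (v r - c / Real.sqrt n) ^ 2
          = ∑ r, ((v r)^2 - 2 * (c / Real.sqrt n) * v r + (c / Real.sqrt n)^2) := by
        apply Finset.sum_congr rfl; intro r _; ring
      rw [this, Finset.sum_add_distrib, Finset.sum_sub_distrib, ← Finset.mul_sum,
        Finset.sum_const, hv2, hvs]
      rw [Finset.card_univ, Fintype.card_fin, nsmul_eq_mul]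
      field_simp
      nlinarith [hn1]
    have hCS : (∑ r, (v r - c / Real.sqrt n) * X r j) ^ 2
        ≤ (∑ r, (v r - c / Real.sqrt n) ^ 2) * ∑ r, (X r j) ^ 2 := by
      exact Finset.sum_mul_sq_le_sq_mul_sq Finset.univ _ _
    rw [hw, hwn, hX2, mul_one] at hCS
    linarith
  -- assemble
  have hμ : muV v X = ∑ j, ∑ r, ((X r j) - v r * (∑ a, v a * X a j)) ^ 2 := by
    rw [muV, Finset.sum_comm]
    apply Finset.sum_congr rfl; intro j _
    apply Finset.sum_congr rfl; intro r _
    congr 1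
    simp [Matrix.sub_apply, Matrix.mul_apply, Finset.mul_sum, mul_assoc]
  rw [hμ]
  calc (k : ℝ) * c ^ 2 = ∑ _j : Fin k, c ^ 2 := by simp
    _ ≤ _ := Finset.sum_le_sum (fun j _ => hcol j)
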